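/- Let u ∈ ℝⁿ, v ∈ ℝⁿ be two samples, and consider the stacked model y = Xβ + ε with yᵀ = (uᵀ, vᵀ) ∈ ℝ^{2n}, X the 2n×2 matrix whose first column is the all-ones vector of length 2n and whose second column is (0ₙ, 1ₙ), A = (0, 1), b = 0. Then the constrained LAD minimizer β̂_{H₀} = (μ̂, 0) with μ̂ any median m_y of the combined sample y, and if no observation equals m_y, the ∞-S statistic s = ‖(AAᵀ)⁻¹AXᵀω‖_∞ with ω = sign(Xβ̂_{H₀} − y) equals |#{i : v_i > m_y} − #{i : v_i < m_y}|. -/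

import Mathlib

open Matrix

/-- the unpaired ∞-S test. With stacked data `y = (u, v)`, design
`X = [1, (0,1)]`, `A = (0 1)`, `b = 0`: the constrained LAD minimizer is
`(m_y, 0)` for `m_y` a median of the combined sample, and, when no observation
equals `m_y`, the statistic `‖(A Aᵀ)⁻¹ A Xᵀ ω‖_∞` with `ω = sign(X β̂ - y)` equals
`|#{i : v_i > m_y} - #{i : v_i < m_y}|` (the median test). -/
theorem stmt17 {n : ℕ} (u v : Fin n → ℝ) (my : ℝ)
    (hmed : ∀ t : ℝ, ∑ i, |Sum.elim u v i - my| ≤ ∑ i, |Sum.elim u v i - t|)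
    (hties : ∀ i, u i ≠ my ∧ v i ≠ my) :
    (let y : Fin n ⊕ Fin n → ℝ := Sum.elim u v
     let X : Matrix (Fin n ⊕ Fin n) (Fin 2) ℝ :=
       fun i j => if j = 0 then 1 else Sum.elim (fun _ => 0) (fun _ => 1) i
     (∀ β : Fin 2 → ℝ, β 1 = 0 →
        ∑ i, |y i - X.mulVec ![my, 0] i| ≤ ∑ i, |y i - X.mulVec β i|) ∧
     (let A : Matrix (Fin 1) (Fin 2) ℝ := !![0, 1]
      let ω : Fin n ⊕ Fin n → ℝ := fun i => Real.sign (X.mulVec ![my, 0] i - y i)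
      (⨆ k, |((A * Aᵀ)⁻¹.mulVec ((A * Xᵀ).mulVec ω)) k|) =
        |((Finset.univ.filter fun i => v i > my).card : ℝ) -
          ((Finset.univ.filter fun i => v i < my).card : ℝ)|)) := by
  set y : Fin n ⊕ Fin n → ℝ := Sum.elim u v with hy
  set X : Matrix (Fin n ⊕ Fin n) (Fin 2) ℝ :=
       fun i j => if j = 0 then 1 else Sum.elim (fun _ => 0) (fun _ => 1) i with hX
  have hhat : ∀ i, X.mulVec ![my, 0] i = my := by
    intro i
    simp [hX, Matrix.mulVec, dotProduct, Fin.sum_univ_two]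
  refine ⟨?_, ?_⟩
  · intro β hβ
    have hXβ : ∀ i, X.mulVec β i = β 0 := by
      intro i
      simp [hX, Matrix.mulVec, dotProduct, Fin.sum_univ_two, hβ]
    simp only [hhat, hXβ]
    have := hmed (β 0)
    simpa [abs_sub_comm] using this
  · intro A ω
    have h1 : A * Aᵀ = 1 := by
      ext i j
      fin_cases i <;> fin_cases j <;>
        simp [A, Matrix.mul_apply, Fin.sum_univ_two]
    rw [h1, inv_one]
    simp only [Matrix.one_mulVec]
    rw [ciSup_unique]
    have hval : ((A * Xᵀ).mulVec ω) default = ∑ i, Real.sign (my - v i) := by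
      simp [Matrix.mulVec, Matrix.mul_apply, dotProduct, Fin.sum_univ_two, A, ω,
        Fintype.sum_sum_type, hhat, hy, hX, Matrix.transpose, Matrix.of_apply]
    rw [hval]
    have hs : ∀ i : Fin n, Real.sign (my - v i) = if v i < my then (1:ℝ) else -1 := by
      intro i
      rcases lt_or_gt_of_ne (hties i).2 with h | h
      · rw [if_pos h, Real.sign_of_pos (by linarith)]
      · rw [if_neg (by linarith), Real.sign_of_neg (by linarith)]
    rw [Finset.sum_congr rfl fun i _ => hs i, Finset.sum_ite, Finset.sum_const,
      Finset.sum_const]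
    have hfilter : (Finset.univ.filter fun i => ¬ v i < my) =
        (Finset.univ.filter fun i => v i > my) := by
      apply Finset.filter_congr
      intro i _
      rcases lt_or_gt_of_ne (hties i).2 with h | h
      · simp [h, le_of_lt h]
      · simp [not_lt, le_of_lt h, h]
    rw [hfilter]
    simp only [nsmul_eq_mul, mul_one, mul_neg_one]
    rw [abs_sub_comm]
    congr 1
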